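/- arXiv:1908.09959 — 2 statements merged into one kernel-verified Lean document; each statement's English description precedes it below -/
import Mathlib

section
/- Let 𝒳 be a finite nonempty set, let (r(x))_{x∈𝒳} be a centered Gaussian vector, and let (H(x))_{x∈𝒳} be a Gaussian vector independent of r. Then |E log ∑_{x∈𝒳} exp(H(x) + r(x)) − E log ∑_{x∈𝒳} exp(H(x))| ≤ max_{x∈𝒳} Var(r(x)). -/
open MeasureTheory ProbabilityTheory Filter
open scoped NNReal ENNReal

noncomputable section

namespace StatementAux

open Real

/-! ### Gaussian moment computations -/

def pdfNN (m : ℝ) (v : ℝ≥0) (x : ℝ) : ℝ≥0 := Real.toNNReal (gaussianPDFReal m v x)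

lemma pdfNN_meas (m : ℝ) (v : ℝ≥0) : Measurable (pdfNN m v) :=
  (measurable_gaussianPDFReal m v).real_toNNReal

lemma gaussianReal_eq_withDensity (m : ℝ) {v : ℝ≥0} (hv : v ≠ 0) :
    gaussianReal m v = volume.withDensity (fun x => (pdfNN m v x : ℝ≥0∞)) := by
  rw [gaussianReal_of_var_ne_zero m hv]; rfl

lemma integrable_gaussian_iff {m : ℝ} {v : ℝ≥0} (hv : v ≠ 0) {g : ℝ → ℝ}
    (_hg : Measurable g) :
    Integrable g (gaussianReal m v) ↔
      Integrable (fun x => gaussianPDFReal m v x * g x) volume := by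
  rw [gaussianReal_eq_withDensity m hv,
    integrable_withDensity_iff_integrable_smul (pdfNN_meas m v)]
  have : ∀ x, pdfNN m v x • g x = gaussianPDFReal m v x * g x := fun x => by
    simp [pdfNN, NNReal.smul_def, Real.coe_toNNReal _ (gaussianPDFReal_nonneg m v x)]
  simp_rw [this]

lemma integral_gaussian_eq {m : ℝ} {v : ℝ≥0} (hv : v ≠ 0) (g : ℝ → ℝ) :
    ∫ x, g x ∂(gaussianReal m v) = ∫ x, gaussianPDFReal m v x * g x := by
  rw [gaussianReal_eq_withDensity m hv, integral_withDensity_eq_integral_smul (pdfNN_meas m v)]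
  congr 1; ext x
  simp [pdfNN, NNReal.smul_def, Real.coe_toNNReal _ (gaussianPDFReal_nonneg m v x)]

lemma pdf0_eq {v : ℝ≥0} (x : ℝ) :
    gaussianPDFReal 0 v x = (√(2 * π * v))⁻¹ * rexp (-(2 * (v:ℝ))⁻¹ * x ^ 2) := by
  rw [gaussianPDFReal]
  congr 1
  rw [sub_zero]
  congr 1
  rw [neg_div, neg_mul, inv_mul_eq_div]

lemma pdf0_even {v : ℝ≥0} (x : ℝ) : gaussianPDFReal 0 v (-x) = gaussianPDFReal 0 v x := by
  rw [pdf0_eq, pdf0_eq, neg_sq]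

lemma integrable_id_gaussian0 (v : ℝ≥0) : Integrable (fun x => x) (gaussianReal 0 v) := by
  by_cases hv : v = 0
  · subst hv; rw [gaussianReal_zero_var]
    exact (integrable_const (0:ℝ)).congr (ae_eq_dirac (fun x : ℝ => x)).symm
  · rw [integrable_gaussian_iff (g := fun x => x) hv measurable_id]
    have hb : (0:ℝ) < (2 * (v:ℝ))⁻¹ := by positivity
    have := (integrable_mul_exp_neg_mul_sq hb).const_mul (√(2 * π * v))⁻¹
    apply this.congr
    filter_upwards with x
    rw [pdf0_eq]
    ring

lemma integral_id_gaussian0 (v : ℝ≥0) : ∫ x, x ∂(gaussianReal 0 v) = 0 := by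
  by_cases hv : v = 0
  · subst hv; rw [gaussianReal_zero_var]; simp
  · rw [integral_gaussian_eq hv]
    have h := integral_neg_eq_self (fun x => gaussianPDFReal 0 v x * x) (volume : Measure ℝ)
    have h2 : ∀ x : ℝ, gaussianPDFReal 0 v (-x) * (-x) = -(gaussianPDFReal 0 v x * x) := by
      intro x; rw [pdf0_even]; ring
    simp_rw [h2, integral_neg] at h
    linarith

lemma integrable_exp_gaussian0 (v : ℝ≥0) : Integrable rexp (gaussianReal 0 v) := by
  by_cases hv : v = 0
  · subst hv; rw [gaussianReal_zero_var]
    exact (integrable_const (rexp 0)).congr (ae_eq_dirac rexp).symm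
  · rw [integrable_gaussian_iff hv Real.measurable_exp]
    have key : ∀ x : ℝ,
        gaussianPDFReal 0 v x * rexp x = rexp ((v:ℝ)/2) * gaussianPDFReal (v:ℝ) v x := by
      intro x
      have hvpos : (0:ℝ) < v := lt_of_le_of_ne (v.coe_nonneg) (by exact_mod_cast (Ne.symm hv))
      have hexp : -(x-0)^2/(2*(v:ℝ)) + x = (v:ℝ)/2 + -(x-(v:ℝ))^2/(2*(v:ℝ)) := by
        field_simp
        ring
      rw [gaussianPDFReal, gaussianPDFReal, mul_assoc, ← Real.exp_add, hexp, Real.exp_add]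
      ring
    simp_rw [key]
    exact (integrable_gaussianPDFReal (v:ℝ) v).const_mul _

lemma integral_exp_gaussian0 (v : ℝ≥0) :
    ∫ x, rexp x ∂(gaussianReal 0 v) = rexp ((v:ℝ)/2) := by
  by_cases hv : v = 0
  · subst hv; rw [gaussianReal_zero_var]; simp
  · rw [integral_gaussian_eq hv]
    have key : ∀ x : ℝ,
        gaussianPDFReal 0 v x * rexp x = rexp ((v:ℝ)/2) * gaussianPDFReal (v:ℝ) v x := by
      intro x
      have hvpos : (0:ℝ) < v := lt_of_le_of_ne (v.coe_nonneg) (by exact_mod_cast (Ne.symm hv))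
      have hexp : -(x-0)^2/(2*(v:ℝ)) + x = (v:ℝ)/2 + -(x-(v:ℝ))^2/(2*(v:ℝ)) := by
        field_simp
        ring
      rw [gaussianPDFReal, gaussianPDFReal, mul_assoc, ← Real.exp_add, hexp, Real.exp_add]
      ring
    simp_rw [key, integral_const_mul, integral_gaussianPDFReal_eq_one (v:ℝ) hv, mul_one]

lemma rpow_two' (x : ℝ) : x ^ (2:ℝ) = x ^ 2 := by
  rw [show (2:ℝ) = ((2:ℕ):ℝ) by norm_num, Real.rpow_natCast]

lemma integrable_sq_gaussian0 (v : ℝ≥0) :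
    Integrable (fun x => x ^ 2) (gaussianReal 0 v) := by
  by_cases hv : v = 0
  · subst hv; rw [gaussianReal_zero_var]
    exact (integrable_const ((0:ℝ)^2)).congr (ae_eq_dirac (fun x : ℝ => x ^ 2)).symm
  · rw [integrable_gaussian_iff (g := fun x => x ^ 2) hv (by fun_prop)]
    have hb : (0:ℝ) < (2 * (v:ℝ))⁻¹ := by positivity
    have := (integrable_rpow_mul_exp_neg_mul_sq hb (s := 2) (by norm_num)).const_mul
      (√(2 * π * v))⁻¹
    apply this.congr
    filter_upwards with x
    rw [pdf0_eq, rpow_two']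
    ring

lemma integral_sq_gaussian0 (v : ℝ≥0) : ∫ x, x ^ 2 ∂(gaussianReal 0 v) = v := by
  by_cases hv : v = 0
  · subst hv; rw [gaussianReal_zero_var]; simp
  · rw [integral_gaussian_eq hv]
    have hvpos : (0:ℝ) < v := lt_of_le_of_ne (v.coe_nonneg) (by exact_mod_cast (Ne.symm hv))
    set b : ℝ := (2*(v:ℝ))⁻¹ with hb
    have hbpos : 0 < b := by positivity
    have h1 : ∀ x : ℝ, gaussianPDFReal 0 v x * x^2
        = (√(2*π*(v:ℝ)))⁻¹ * (x^2 * rexp (-b*x^2)) := by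
      intro x; rw [pdf0_eq]; ring
    simp_rw [h1, integral_const_mul]
    have h2 : (∫ x : ℝ, x^2 * rexp (-b*x^2))
        = 2 * ∫ x in Set.Ioi (0:ℝ), x^2 * rexp (-b*x^2) := by
      rw [← integral_comp_abs (f := fun x => x^2 * rexp (-b*x^2))]
      congr 1; ext x; rw [sq_abs]
    have h3 : (∫ x in Set.Ioi (0:ℝ), x^2 * rexp (-b*x^2)) = b ^ (-(3:ℝ)/2) * √π / 4 := by
      have h := integral_rpow_mul_exp_neg_mul_rpow (p:=2) (q:=2) (b:=b) two_pos (by norm_num)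
        hbpos
      simp_rw [rpow_two'] at h
      rw [h, show ((2:ℝ)+1)/2 = 1/2 + 1 by norm_num,
        Real.Gamma_add_one (by norm_num : (1:ℝ)/2 ≠ 0), Real.Gamma_one_half_eq]
      rw [show (-((2:ℝ)+1)/2) = -(3:ℝ)/2 by norm_num]
      ring
    rw [h2, h3]
    have e1 : b ^ (-(3:ℝ)/2) = (2*(v:ℝ)) ^ ((3:ℝ)/2) := by
      rw [hb, Real.inv_rpow (by positivity), show (-(3:ℝ)/2) = -((3:ℝ)/2) by norm_num,
        Real.rpow_neg (by positivity), inv_inv]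
    have e2 : (2*(v:ℝ)) ^ ((3:ℝ)/2) = (2*(v:ℝ)) * √(2*(v:ℝ)) := by
      rw [show (3:ℝ)/2 = 1 + 1/2 by norm_num, Real.rpow_add (by positivity), Real.rpow_one,
        Real.sqrt_eq_rpow]
    have e3 : √(2*π*(v:ℝ)) = √(2*(v:ℝ)) * √π := by
      rw [show 2*π*(v:ℝ) = (2*(v:ℝ))*π by ring, Real.sqrt_mul (by positivity)]
    rw [e1, e2, e3]
    have s1 : 0 < √(2*(v:ℝ)) := Real.sqrt_pos.mpr (by positivity)
    have s2 : 0 < √π := Real.sqrt_pos.mpr pi_pos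
    field_simp
    ring_nf

lemma integrable_id_gaussian (m : ℝ) (v : ℝ≥0) :
    Integrable (fun x => x) (gaussianReal m v) := by
  have hmap : (gaussianReal 0 v).map (· + m) = gaussianReal m v := by
    rw [gaussianReal_map_add_const, zero_add]
  rw [← hmap,
    integrable_map_measure measurable_id'.aestronglyMeasurable
      (measurable_id'.add_const m).aemeasurable]
  exact (integrable_id_gaussian0 v).add (integrable_const m)

/-! ### Log-sum-exp facts -/

variable {ι : Type} [Fintype ι] [Nonempty ι]

def L (f : ι → ℝ) : ℝ := Real.log (∑ x, rexp (f x))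

lemma sumexp_pos (f : ι → ℝ) : 0 < ∑ x, rexp (f x) :=
  Finset.sum_pos (fun _x _ => Real.exp_pos _) Finset.univ_nonempty

omit [Nonempty ι] in
lemma L_meas : Measurable (L (ι := ι)) :=
  Real.measurable_log.comp (Finset.measurable_sum _ fun x _ => (measurable_pi_apply x).exp)

lemma abs_L_le (f : ι → ℝ) : |L f| ≤ (∑ x, |f x|) + Real.log (Fintype.card ι) := by
  have hcard : (1:ℝ) ≤ (Fintype.card ι : ℝ) := by
    exact_mod_cast Fintype.card_pos
  have hlogcard : (0:ℝ) ≤ Real.log (Fintype.card ι) := Real.log_nonneg hcard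
  set S := ∑ x, |f x| with hS
  have hbound : ∀ x : ι, f x ≤ S := fun x =>
    le_trans (le_abs_self _)
      (Finset.single_le_sum (fun y _ => abs_nonneg (f y)) (Finset.mem_univ x))
  have hboundlow : ∀ x : ι, -S ≤ f x := fun x =>
    le_trans (neg_le_neg (Finset.single_le_sum (fun y _ => abs_nonneg (f y)) (Finset.mem_univ x)))
      (neg_abs_le _)
  rw [abs_le]
  constructor
  · obtain ⟨x0⟩ := ‹Nonempty ι›
    have h1 : rexp (f x0) ≤ ∑ x, rexp (f x) :=
      Finset.single_le_sum (fun y _ => (Real.exp_pos _).le) (Finset.mem_univ x0)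
    have h2 : f x0 ≤ L f := by
      rw [L, ← Real.log_exp (f x0)]
      exact Real.log_le_log (Real.exp_pos _) h1
    have := hboundlow x0
    simp only [L] at h2 ⊢
    linarith
  · have h1 : ∑ x, rexp (f x) ≤ (Fintype.card ι : ℝ) * rexp S := by
      calc ∑ x, rexp (f x) ≤ ∑ _x : ι, rexp S :=
            Finset.sum_le_sum fun x _ => Real.exp_le_exp.mpr (hbound x)
        _ = (Fintype.card ι : ℝ) * rexp S := by
            rw [Finset.sum_const, Finset.card_univ, nsmul_eq_mul]
    have h2 : L f ≤ Real.log ((Fintype.card ι : ℝ) * rexp S) :=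
      Real.log_le_log (sumexp_pos f) h1
    rw [Real.log_mul (by positivity) (Real.exp_ne_zero _), Real.log_exp] at h2
    simp only [L] at h2 ⊢
    linarith

lemma L_add_ge (f g : ι → ℝ) :
    L f + ∑ x, (rexp (f x) / ∑ y, rexp (f y)) * g x ≤ L (f + g) := by
  set Z := ∑ y, rexp (f y) with hZ
  have hZpos : 0 < Z := sumexp_pos f
  set w : ι → ℝ := fun x => rexp (f x) / Z with hw
  have hwnn : ∀ x ∈ Finset.univ, (0:ℝ) ≤ w x := fun x _ => by positivity
  have hwsum : ∑ x, w x = 1 := by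
    rw [hw, ← Finset.sum_div]
    exact div_self hZpos.ne'
  have jensen : rexp (∑ x, w x * g x) ≤ ∑ x, w x * rexp (g x) := by
    have h := Real.geom_mean_le_arith_mean_weighted Finset.univ w (fun x => rexp (g x))
      hwnn hwsum (fun x _ => (Real.exp_pos _).le)
    have heq : ∀ x : ι, rexp (g x) ^ (w x) = rexp (g x * w x) := fun x => by
      rw [← Real.exp_mul]
    calc rexp (∑ x, w x * g x) = ∏ x, rexp (g x * w x) := by
          rw [← Real.exp_sum]
          congr 1
          exact Finset.sum_congr rfl fun x _ => by ring
      _ = ∏ x, rexp (g x) ^ (w x) :=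
          Finset.prod_congr rfl fun x _ => (heq x).symm
      _ ≤ ∑ x, w x * rexp (g x) := h
  have hsum_pos : 0 < ∑ x, w x * rexp (g x) :=
    lt_of_lt_of_le (Real.exp_pos _) jensen
  have hdecomp : ∑ x, rexp ((f + g) x) = Z * ∑ x, w x * rexp (g x) := by
    rw [Finset.mul_sum]
    refine Finset.sum_congr rfl fun x _ => ?_
    rw [Pi.add_apply, Real.exp_add, hw]
    field_simp
  have hL : L (f + g) = Real.log Z + Real.log (∑ x, w x * rexp (g x)) := by
    rw [L, hdecomp, Real.log_mul hZpos.ne' hsum_pos.ne']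
  rw [hL]
  have h2 : ∑ x, w x * g x ≤ Real.log (∑ x, w x * rexp (g x)) := by
    rw [← Real.log_exp (∑ x, w x * g x)]
    exact Real.log_le_log (Real.exp_pos _) jensen
  simp only [L, ← hZ]
  linarith

lemma integrable_L {α : Type} [MeasurableSpace α] (P : Measure α) [IsProbabilityMeasure P]
    (f : α → ι → ℝ) (hf : Measurable f) (hint : ∀ x, Integrable (fun a => f a x) P) :
    Integrable (fun a => L (f a)) P := by
  refine Integrable.mono' (((integrable_finset_sum Finset.univ
      (fun x _ => (hint x).abs)).add (integrable_const (Real.log (Fintype.card ι)))))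
    (L_meas.comp hf).aestronglyMeasurable ?_
  filter_upwards with a
  rw [Real.norm_eq_abs]
  exact abs_L_le (f a)

end StatementAux

/-- `(r x)_{x ∈ ι}` is a centered Gaussian vector: each finite linear combination
`∑ₓ cₓ r(x)` is a centered Gaussian random variable. -/
def IsCenteredGaussianVector {Ω : Type} [MeasurableSpace Ω] (μ : Measure Ω)
    {ι : Type} [Fintype ι] (r : ι → Ω → ℝ) : Prop :=
  (∀ x, Measurable (r x)) ∧
  ∀ c : ι → ℝ, ∃ v : ℝ≥0,
    Measure.map (fun ω => ∑ x, c x * r x ω) μ = gaussianReal 0 v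

/-- `(H x)_{x ∈ ι}` is a (not necessarily centered) Gaussian vector. -/
def IsGaussianVector {Ω : Type} [MeasurableSpace Ω] (μ : Measure Ω)
    {ι : Type} [Fintype ι] (H : ι → Ω → ℝ) : Prop :=
  (∀ x, Measurable (H x)) ∧
  ∀ c : ι → ℝ, ∃ m : ℝ, ∃ v : ℝ≥0,
    Measure.map (fun ω => ∑ x, c x * H x ω) μ = gaussianReal m v

/-- Gaussian interpolation bound.
Let `𝒳` be a finite nonempty set, `(r(x))_{x ∈ 𝒳}` a centered Gaussian vector and
`(H(x))_{x ∈ 𝒳}` a Gaussian vector independent of `r`.  Then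
`|E log ∑ₓ exp(H(x) + r(x)) − E log ∑ₓ exp(H(x))| ≤ maxₓ Var(r(x))`. -/
theorem statement10 {Ω : Type} [MeasurableSpace Ω] (μ : Measure Ω)
    [IsProbabilityMeasure μ] {ι : Type} [Fintype ι] [Nonempty ι]
    (r H : ι → Ω → ℝ)
    (hr : IsCenteredGaussianVector μ r) (hH : IsGaussianVector μ H)
    (hInd : IndepFun (fun ω x => r x ω) (fun ω x => H x ω) μ) :
    |(∫ ω, Real.log (∑ x, Real.exp (H x ω + r x ω)) ∂μ) -
        ∫ ω, Real.log (∑ x, Real.exp (H x ω)) ∂μ| ≤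
      ⨆ x : ι, variance (r x) μ := by
  classical
  open StatementAux in
  obtain ⟨hrmeas, hrlaw⟩ := hr
  obtain ⟨hHmeas, hHlaw⟩ := hH
  -- coordinate laws of r
  have hrx : ∀ x : ι, ∃ v : ℝ≥0, Measure.map (r x) μ = gaussianReal 0 v := by
    intro x
    obtain ⟨v, hv⟩ := hrlaw (Pi.single x 1)
    refine ⟨v, ?_⟩
    rw [← hv]
    congr 1
    funext ω
    simp [Pi.single_apply]
  choose vv hvv using hrx
  -- integrability facts for the coordinates of r
  have hrint : ∀ x, Integrable (r x) μ := by
    intro x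
    have h1 : Integrable (fun y : ℝ => y) (Measure.map (r x) μ) := by
      rw [hvv x]; exact StatementAux.integrable_id_gaussian0 (vv x)
    exact (integrable_map_measure measurable_id'.aestronglyMeasurable (hrmeas x).aemeasurable).mp h1
  have hrexp : ∀ x, Integrable (fun ω => Real.exp (r x ω)) μ := by
    intro x
    have h1 : Integrable Real.exp (Measure.map (r x) μ) := by
      rw [hvv x]; exact StatementAux.integrable_exp_gaussian0 (vv x)
    exact (integrable_map_measure Real.measurable_exp.aestronglyMeasurable
      (hrmeas x).aemeasurable).mp h1
  have hrmean : ∀ x, ∫ ω, r x ω ∂μ = 0 := by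
    intro x
    have h1 : ∫ y, (fun y : ℝ => y) y ∂(Measure.map (r x) μ) = 0 := by
      rw [hvv x]; exact StatementAux.integral_id_gaussian0 (vv x)
    rwa [integral_map (hrmeas x).aemeasurable measurable_id'.aestronglyMeasurable] at h1
  have hrexp_mean : ∀ x, ∫ ω, Real.exp (r x ω) ∂μ = Real.exp ((vv x : ℝ)/2) := by
    intro x
    have h1 : ∫ y, Real.exp y ∂(Measure.map (r x) μ) = Real.exp ((vv x : ℝ)/2) := by
      rw [hvv x]; exact StatementAux.integral_exp_gaussian0 (vv x)
    rwa [integral_map (hrmeas x).aemeasurable Real.measurable_exp.aestronglyMeasurable] at h1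
  -- variance of the coordinates of r
  have hvar : ∀ x, variance (r x) μ = (vv x : ℝ) := by
    intro x
    have hmem : MemLp (r x) 2 μ := by
      have h1 : MemLp (fun y : ℝ => y) 2 (Measure.map (r x) μ) := by
        rw [hvv x]
        exact (memLp_two_iff_integrable_sq measurable_id'.aestronglyMeasurable).mpr
          (StatementAux.integrable_sq_gaussian0 (vv x))
      exact (memLp_map_measure_iff measurable_id'.aestronglyMeasurable (hrmeas x).aemeasurable).mp h1
    have h2 : (∫ ω, (r x ω)^2 ∂μ) = (vv x : ℝ) := by
      have h1 : ∫ y, (fun y : ℝ => y ^ 2) y ∂(Measure.map (r x) μ) = (vv x : ℝ) := by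
        rw [hvv x]; exact StatementAux.integral_sq_gaussian0 (vv x)
      rwa [integral_map (hrmeas x).aemeasurable (by fun_prop)] at h1
    have e : (r x) ^ 2 = fun ω => (r x ω) ^ 2 := rfl
    rw [variance_eq_sub hmem, e, h2, hrmean x]
    norm_num
  -- coordinates of H are integrable
  have hHint : ∀ x, Integrable (H x) μ := by
    intro x
    obtain ⟨m, w, hmw⟩ : ∃ m w, Measure.map (H x) μ = gaussianReal m w := by
      obtain ⟨m, w, hmw⟩ := hHlaw (Pi.single x 1)
      refine ⟨m, w, ?_⟩
      rw [← hmw]; congr 1; funext ω; simp [Pi.single_apply]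
    have h1 : Integrable (fun y : ℝ => y) (Measure.map (H x) μ) := by
      rw [hmw]; exact StatementAux.integrable_id_gaussian m w
    exact (integrable_map_measure measurable_id'.aestronglyMeasurable (hHmeas x).aemeasurable).mp h1
  set V := ⨆ x : ι, variance (r x) μ with hV
  have hVle : ∀ x, ((vv x : ℝ)) ≤ V := by
    intro x
    rw [← hvar x]
    exact le_ciSup (f := fun x => variance (r x) μ) (Set.Finite.bddAbove (Set.finite_range _)) x
  have hV0 : 0 ≤ V := le_trans (vv (Classical.arbitrary ι)).coe_nonneg (hVle _)
  set R : Ω → ι → ℝ := fun ω x => r x ω with hRdef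
  set Hv : Ω → ι → ℝ := fun ω x => H x ω with hHvdef
  have hRmeas : Measurable R := measurable_pi_lambda _ hrmeas
  have hHvmeas : Measurable Hv := measurable_pi_lambda _ hHmeas
  have hintHR : Integrable (fun ω => StatementAux.L (Hv ω + R ω)) μ :=
    StatementAux.integrable_L μ _ (hHvmeas.add hRmeas)
      (fun x => by
        have : Integrable (fun ω => H x ω + r x ω) μ := (hHint x).add (hrint x)
        exact this)
  have hintH : Integrable (fun ω => StatementAux.L (Hv ω)) μ :=
    StatementAux.integrable_L μ _ hHvmeas (fun x => hHint x)
  have goal1 : (∫ ω, Real.log (∑ x, Real.exp (H x ω + r x ω)) ∂μ)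
      = ∫ ω, StatementAux.L (Hv ω + R ω) ∂μ := rfl
  have goal2 : (∫ ω, Real.log (∑ x, Real.exp (H x ω)) ∂μ)
      = ∫ ω, StatementAux.L (Hv ω) ∂μ := rfl
  rw [goal1, goal2]
  set A := ∫ ω, StatementAux.L (Hv ω + R ω) ∂μ with hA
  set B := ∫ ω, StatementAux.L (Hv ω) ∂μ with hB
  -- ### Lower bound : B ≤ A
  have hWint : ∀ x : ι,
      Integrable (fun ω => (Real.exp (H x ω) / ∑ y, Real.exp (H y ω)) * r x ω) μ := by
    intro x
    refine Integrable.mono' (hrint x).abs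
      ((((hHmeas x).exp.div (Finset.measurable_sum _ fun y _ => (hHmeas y).exp)).mul
        (hrmeas x)).aestronglyMeasurable) ?_
    filter_upwards with ω
    rw [Real.norm_eq_abs, abs_mul]
    have hpos : 0 < ∑ y, Real.exp (H y ω) :=
      Finset.sum_pos (fun y _ => Real.exp_pos _) Finset.univ_nonempty
    have h1 : |Real.exp (H x ω) / ∑ y, Real.exp (H y ω)| ≤ 1 := by
      rw [abs_of_nonneg (by positivity), div_le_one hpos]
      exact Finset.single_le_sum (f := fun y => Real.exp (H y ω))
        (fun y _ => (Real.exp_pos _).le) (Finset.mem_univ x)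
    calc |Real.exp (H x ω) / ∑ y, Real.exp (H y ω)| * |r x ω|
        ≤ 1 * |r x ω| := mul_le_mul_of_nonneg_right h1 (abs_nonneg _)
      _ = |r x ω| := one_mul _
  have hWzero : ∀ x : ι,
      (∫ ω, (Real.exp (H x ω) / ∑ y, Real.exp (H y ω)) * r x ω ∂μ) = 0 := by
    intro x
    set φ : (ι → ℝ) → ℝ := fun h => Real.exp (h x) / ∑ y, Real.exp (h y) with hφ
    have hφm : Measurable φ :=
      (measurable_pi_apply x).exp.div (Finset.measurable_sum _ fun y _ =>
        (measurable_pi_apply y).exp)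
    have hind2 : IndepFun (fun ω => φ (Hv ω)) (r x) μ :=
      (hInd.symm).comp hφm (measurable_pi_apply x)
    have hmul := hind2.integral_mul_eq_mul_integral (hφm.comp hHvmeas).aestronglyMeasurable
      (hrmeas x).aestronglyMeasurable
    have hfin : integral μ ((fun ω => φ (Hv ω)) * r x) = 0 := by
      rw [hmul, hrmean x, mul_zero]
    exact hfin
  have hintsum : Integrable
      (fun ω => ∑ x, (Real.exp (H x ω) / ∑ y, Real.exp (H y ω)) * r x ω) μ :=
    integrable_finset_sum _ fun x _ => hWint x
  have hlow : B ≤ A := by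
    have hle : (fun ω => StatementAux.L (Hv ω)
          + ∑ x, (Real.exp (H x ω) / ∑ y, Real.exp (H y ω)) * r x ω)
        ≤ fun ω => StatementAux.L (Hv ω + R ω) :=
      fun ω => StatementAux.L_add_ge (Hv ω) (R ω)
    have h2 := integral_mono
      (f := fun ω => StatementAux.L (Hv ω)
          + ∑ x, (Real.exp (H x ω) / ∑ y, Real.exp (H y ω)) * r x ω)
      (g := fun ω => StatementAux.L (Hv ω + R ω))
      (hintH.add hintsum) hintHR hle
    have h4 : (∫ ω, (StatementAux.L (Hv ω)
          + ∑ x, (Real.exp (H x ω) / ∑ y, Real.exp (H y ω)) * r x ω) ∂μ) = B := by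
      rw [integral_add hintH hintsum, integral_finset_sum _ (fun x _ => hWint x)]
      have h3 : ∑ x : ι, (∫ ω, (Real.exp (H x ω) / ∑ y, Real.exp (H y ω)) * r x ω ∂μ)
          = 0 := Finset.sum_eq_zero fun x _ => hWzero x
      rw [h3, add_zero]
    rw [h4] at h2
    exact h2
  -- ### Upper bound : A ≤ B + V/2
  set ν := Measure.map R μ with hν
  set κ := Measure.map Hv μ with hκ
  haveI : IsProbabilityMeasure ν := Measure.isProbabilityMeasure_map hRmeas.aemeasurable
  haveI : IsProbabilityMeasure κ := Measure.isProbabilityMeasure_map hHvmeas.aemeasurable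
  have hprod : Measure.map (fun ω => (R ω, Hv ω)) μ = ν.prod κ :=
    (indepFun_iff_map_prod_eq_prod_map_map hRmeas.aemeasurable hHvmeas.aemeasurable).mp hInd
  set F : (ι → ℝ) × (ι → ℝ) → ℝ := fun p => StatementAux.L (p.2 + p.1) with hF
  have hFmeas : Measurable F := StatementAux.L_meas.comp (measurable_snd.add measurable_fst)
  have hνcoord : ∀ x, Integrable (fun s : ι → ℝ => s x) ν := fun x =>
    (integrable_map_measure (measurable_pi_apply x).aestronglyMeasurable
      hRmeas.aemeasurable).mpr (hrint x)
  have hκcoord : ∀ x, Integrable (fun s : ι → ℝ => s x) κ := fun x =>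
    (integrable_map_measure (measurable_pi_apply x).aestronglyMeasurable
      hHvmeas.aemeasurable).mpr (hHint x)
  have hνexp : ∀ x, Integrable (fun s : ι → ℝ => Real.exp (s x)) ν := fun x =>
    (integrable_map_measure ((measurable_pi_apply x).exp).aestronglyMeasurable
      hRmeas.aemeasurable).mpr (hrexp x)
  have hνexp_mean : ∀ x, (∫ s, Real.exp (s x) ∂ν) = Real.exp ((vv x : ℝ)/2) := by
    intro x
    rw [hν, integral_map hRmeas.aemeasurable ((measurable_pi_apply x).exp).aestronglyMeasurable]
    exact hrexp_mean x
  -- integrability of F on the product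
  have hfst : ∀ {g : (ι → ℝ) → ℝ}, Measurable g → Integrable g ν →
      Integrable (fun p : (ι → ℝ) × (ι → ℝ) => g p.1) (ν.prod κ) := by
    intro g hg hgint
    have hmap : (ν.prod κ).map Prod.fst = ν := by
      rw [Measure.map_fst_prod]; simp
    rw [← hmap] at hgint
    exact (integrable_map_measure hg.aestronglyMeasurable measurable_fst.aemeasurable).mp hgint
  have hsnd : ∀ {g : (ι → ℝ) → ℝ}, Measurable g → Integrable g κ →
      Integrable (fun p : (ι → ℝ) × (ι → ℝ) => g p.2) (ν.prod κ) := by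
    intro g hg hgint
    have hmap : (ν.prod κ).map Prod.snd = κ := by
      rw [Measure.map_snd_prod]; simp
    rw [← hmap] at hgint
    exact (integrable_map_measure hg.aestronglyMeasurable measurable_snd.aemeasurable).mp hgint
  have hFint : Integrable F (ν.prod κ) := by
    have h1 : Integrable (fun p : (ι → ℝ) × (ι → ℝ) => ∑ x, |p.1 x|) (ν.prod κ) :=
      hfst (Finset.measurable_sum _ fun x _ => (measurable_pi_apply x).abs)
        (integrable_finset_sum _ fun x _ => (hνcoord x).abs)
    have h2 : Integrable (fun p : (ι → ℝ) × (ι → ℝ) => ∑ x, |p.2 x|) (ν.prod κ) :=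
      hsnd (Finset.measurable_sum _ fun x _ => (measurable_pi_apply x).abs)
        (integrable_finset_sum _ fun x _ => (hκcoord x).abs)
    refine Integrable.mono' ((h1.add h2).add
      (integrable_const (Real.log (Fintype.card ι))))
      hFmeas.aestronglyMeasurable ?_
    filter_upwards with p
    rw [Real.norm_eq_abs]
    calc |F p| ≤ (∑ x, |(p.2 + p.1) x|) + Real.log (Fintype.card ι) :=
          StatementAux.abs_L_le _
      _ ≤ ((∑ x, |p.1 x|) + ∑ x, |p.2 x|) + Real.log (Fintype.card ι) := by
          gcongr
          rw [← Finset.sum_add_distrib]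
          refine Finset.sum_le_sum fun x _ => ?_
          rw [Pi.add_apply]
          calc |p.2 x + p.1 x| ≤ |p.2 x| + |p.1 x| := abs_add_le _ _
            _ = |p.1 x| + |p.2 x| := add_comm _ _
  -- A as an integral over the product measure
  have hAprod : A = ∫ p, F p ∂(ν.prod κ) := by
    rw [← hprod, integral_map (hRmeas.prodMk hHvmeas).aemeasurable
      hFmeas.aestronglyMeasurable]
  -- inner bound
  have hinner : ∀ h : ι → ℝ, (∫ s, F (s, h) ∂ν) ≤ StatementAux.L h + V/2 := by
    intro h
    set g : (ι → ℝ) → ℝ := fun s => ∑ x, Real.exp (h x + s x) with hg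
    have hgpos : ∀ s, 0 < g s := fun s =>
      Finset.sum_pos (fun x _ => Real.exp_pos _) Finset.univ_nonempty
    have hterm : ∀ x : ι, Integrable (fun s : ι → ℝ => Real.exp (h x + s x)) ν := by
      intro x
      apply ((hνexp x).const_mul (Real.exp (h x))).congr
      filter_upwards with s
      rw [← Real.exp_add]
    have hgint : Integrable g ν := integrable_finset_sum _ fun x _ => hterm x
    set c := ∑ x, Real.exp (h x) * Real.exp ((vv x : ℝ)/2) with hc
    have hgmean : ∫ s, g s ∂ν = c := by
      rw [hg, integral_finset_sum _ fun x _ => hterm x]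
      refine Finset.sum_congr rfl fun x _ => ?_
      have : (∫ s : ι → ℝ, Real.exp (h x + s x) ∂ν)
          = ∫ s : ι → ℝ, Real.exp (h x) * Real.exp (s x) ∂ν := by
        congr 1; funext s; rw [← Real.exp_add]
      rw [this, integral_const_mul, hνexp_mean x]
    have hcpos : 0 < c := by
      rw [hc]
      exact Finset.sum_pos (fun x _ => by positivity) Finset.univ_nonempty
    have hlogint : Integrable (fun s => Real.log (g s)) ν := by
      have := StatementAux.integrable_L ν (fun s => h + s)
        (measurable_const.add measurable_id)
        (fun x => by
          have : Integrable (fun s : ι → ℝ => h x + s x) ν :=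
            (integrable_const (h x)).add (hνcoord x)
          exact this)
      exact this
    have hpt : ∀ s, Real.log (g s) ≤ Real.log c + (g s - c)/c := by
      intro s
      have h1 := Real.log_le_sub_one_of_pos (div_pos (hgpos s) hcpos)
      rw [Real.log_div (hgpos s).ne' hcpos.ne'] at h1
      have h2 : g s / c - 1 = (g s - c)/c := by field_simp
      linarith [h2 ▸ h1]
    have hbd2 : Integrable (fun s => (g s - c)/c) ν := by
      have h0 := (hgint.sub (integrable_const c)).div_const c
      exact h0.congr (by filter_upwards with s; rfl)
    have hbd_int : Integrable (fun s => Real.log c + (g s - c)/c) ν :=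
      (integrable_const _).add hbd2
    have hmono := integral_mono (f := fun s => Real.log (g s))
      (g := fun s => Real.log c + (g s - c)/c) hlogint hbd_int hpt
    have hcalc : (∫ s, (Real.log c + (g s - c)/c) ∂ν) = Real.log c := by
      rw [integral_add (integrable_const _) hbd2,
        integral_const, integral_div, integral_sub hgint (integrable_const c),
        integral_const, hgmean]
      simp
    rw [hcalc] at hmono
    have hFg : (∫ s, F (s, h) ∂ν) = ∫ s, Real.log (g s) ∂ν := rfl
    rw [hFg]
    refine le_trans hmono ?_
    -- log c ≤ L h + V/2
    have hcle : c ≤ Real.exp (V/2) * ∑ x, Real.exp (h x) := by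
      rw [hc, Finset.mul_sum]
      refine Finset.sum_le_sum fun x _ => ?_
      have hee : Real.exp ((vv x : ℝ)/2) ≤ Real.exp (V/2) :=
        Real.exp_le_exp.mpr (by linarith [hVle x])
      calc Real.exp (h x) * Real.exp ((vv x : ℝ)/2)
          ≤ Real.exp (h x) * Real.exp (V/2) :=
            mul_le_mul_of_nonneg_left hee (Real.exp_pos _).le
        _ = Real.exp (V/2) * Real.exp (h x) := mul_comm _ _
    have hlog := Real.log_le_log hcpos hcle
    rw [Real.log_mul (Real.exp_ne_zero _) (StatementAux.sumexp_pos h).ne',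
      Real.log_exp] at hlog
    have hLh : StatementAux.L h = Real.log (∑ x, Real.exp (h x)) := rfl
    rw [hLh]
    linarith
  have hBκ : (∫ h, StatementAux.L h ∂κ) = B := by
    rw [hκ, integral_map hHvmeas.aemeasurable StatementAux.L_meas.aestronglyMeasurable]
  have hup : A ≤ B + V/2 := by
    rw [hAprod, integral_prod_symm F hFint]
    have hLκ : Integrable (fun h : ι → ℝ => StatementAux.L h) κ :=
      StatementAux.integrable_L κ (fun h => h) measurable_id' fun x => hκcoord x
    calc (∫ h, (∫ s, F (s, h) ∂ν) ∂κ)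
        ≤ ∫ h, (StatementAux.L h + V/2) ∂κ :=
          integral_mono (f := fun h => ∫ s, F (s, h) ∂ν)
            (g := fun h => StatementAux.L h + V/2)
            hFint.integral_prod_right (hLκ.add (integrable_const _)) hinner
      _ = B + V/2 := by
          rw [integral_add hLκ (integrable_const _), integral_const]
          simp [hBκ]
  rw [abs_le]
  constructor <;> linarith

end
end

section
/- Let (X, Y) be a pair of real random variables on a common probability space with X ∈ {0,1} almost surely, P(X = 1) = ρ for some ρ ∈ (0,1), E[Y²] = ρ, and E[XY] ≥ δρ for some constant δ > 0. Then (δ²/4)·ρ ≤ P(Y > δ/2) ≤ (1 + 4/δ²)·ρ, and P(X = 1 | Y > δ/2) ≥ δ⁴/16. -/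
open MeasureTheory ProbabilityTheory

noncomputable section

/-- a Paley–Zygmund-type rounding lemma.
Let `(X, Y)` be real random variables with `X ∈ {0,1}` a.s., `P(X = 1) = ρ` for some
`ρ ∈ (0,1)`, `E[Y²] = ρ`, and `E[XY] ≥ δρ` for a constant `δ > 0`.  Then
`(δ²/4)ρ ≤ P(Y > δ/2) ≤ (1 + 4/δ²)ρ` and `P(X = 1 | Y > δ/2) ≥ δ⁴/16`. -/
theorem statement11 {Ω : Type} [MeasurableSpace Ω] (μ : Measure Ω)
    [IsProbabilityMeasure μ] (X Y : Ω → ℝ) (hX : Measurable X) (hY : Measurable Y)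
    (ρ δ : ℝ) (hρ : ρ ∈ Set.Ioo (0 : ℝ) 1) (hδ : 0 < δ)
    (hX01 : ∀ᵐ ω ∂μ, X ω = 0 ∨ X ω = 1)
    (hXρ : (μ {ω | X ω = 1}).toReal = ρ)
    (hY2int : Integrable (fun ω => Y ω ^ 2) μ)
    (hY2 : ∫ ω, Y ω ^ 2 ∂μ = ρ)
    (hXYint : Integrable (fun ω => X ω * Y ω) μ)
    (hXY : δ * ρ ≤ ∫ ω, X ω * Y ω ∂μ) :
    δ ^ 2 / 4 * ρ ≤ (μ {ω | δ / 2 < Y ω}).toReal ∧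
    (μ {ω | δ / 2 < Y ω}).toReal ≤ (1 + 4 / δ ^ 2) * ρ ∧
    δ ^ 4 / 16 ≤
      (μ {ω | X ω = 1 ∧ δ / 2 < Y ω}).toReal / (μ {ω | δ / 2 < Y ω}).toReal := by
  obtain ⟨hρ0, hρ1⟩ := hρ
  set A : Set Ω := {ω | X ω = 1} with hA
  set B : Set Ω := {ω | δ / 2 < Y ω} with hB
  have hAm : MeasurableSet A := hX (measurableSet_singleton 1)
  have hBm : MeasurableSet B := measurableSet_lt measurable_const hY
  have hX0 : ∀ᵐ ω ∂μ, 0 ≤ X ω := by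
    filter_upwards [hX01] with ω h
    rcases h with h | h <;> simp [h]
  have hX1 : ∀ᵐ ω ∂μ, X ω ≤ 1 := by
    filter_upwards [hX01] with ω h
    rcases h with h | h <;> simp [h]
  have hXint : Integrable X μ := by
    refine (integrable_const (1 : ℝ)).mono' hX.aestronglyMeasurable ?_
    filter_upwards [hX01] with ω h
    rcases h with h | h <;> simp [h]
  have hXind : X =ᵐ[μ] A.indicator (fun _ => (1 : ℝ)) := by
    filter_upwards [hX01] with ω h
    rcases h with h | h
    · have hω : ω ∉ A := by simp [hA, h]
      simp [Set.indicator_of_notMem hω, h]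
    · have hω : ω ∈ A := h
      simp [Set.indicator_of_mem hω, h]
  have hintX : ∫ ω, X ω ∂μ = ρ := by
    rw [integral_congr_ae hXind, integral_indicator_const _ hAm]
    simpa [Measure.real_def] using hXρ
  have hXY2int : Integrable (fun ω => X ω * Y ω ^ 2) μ := by
    refine hY2int.mono' (hX.mul (hY.pow_const 2)).aestronglyMeasurable ?_
    filter_upwards [hX01] with ω h
    rcases h with h | h
    · simp [h, sq_nonneg (Y ω)]
    · simp [h, abs_of_nonneg (sq_nonneg (Y ω))]
  -- Markov bound : (δ/2)^2 * μ B ≤ ρ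
  have hmarkov : (δ / 2) ^ 2 * (μ B).toReal ≤ ρ := by
    have h1 : (δ / 2) ^ 2 * (μ B).toReal ≤ ∫ ω in B, Y ω ^ 2 ∂μ := by
      refine setIntegral_ge_of_const_le_real hBm (measure_ne_top μ B)
        (fun ω hω => ?_) hY2int.integrableOn
      have hω' : δ / 2 < Y ω := hω
      have : 0 ≤ δ / 2 := by positivity
      nlinarith
    have h2 : ∫ ω in B, Y ω ^ 2 ∂μ ≤ ρ := by
      rw [← hY2]
      exact setIntegral_le_integral hY2int (.of_forall fun ω => sq_nonneg _)
    linarith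
  -- E[XY] restricted to B is large
  have hsplit : ∫ ω in B, X ω * Y ω ∂μ + ∫ ω in Bᶜ, X ω * Y ω ∂μ
      = ∫ ω, X ω * Y ω ∂μ := integral_add_compl hBm hXYint
  have hcompl : ∫ ω in Bᶜ, X ω * Y ω ∂μ ≤ δ / 2 * ρ := by
    have h1 : ∫ ω in Bᶜ, X ω * Y ω ∂μ ≤ ∫ ω in Bᶜ, δ / 2 * X ω ∂μ := by
      refine setIntegral_mono_ae_restrict hXYint.integrableOn
        (hXint.const_mul (δ / 2)).integrableOn ?_
      filter_upwards [ae_restrict_mem hBm.compl, ae_restrict_of_ae hX0] with ω hω h0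
      have hYω : Y ω ≤ δ / 2 := not_lt.mp (by simpa [hB] using hω)
      calc X ω * Y ω ≤ X ω * (δ / 2) := mul_le_mul_of_nonneg_left hYω h0
        _ = δ / 2 * X ω := mul_comm _ _
    have h2 : ∫ ω in Bᶜ, δ / 2 * X ω ∂μ = δ / 2 * ∫ ω in Bᶜ, X ω ∂μ :=
      integral_const_mul _ _
    have h3 : ∫ ω in Bᶜ, X ω ∂μ ≤ ρ := hintX ▸ setIntegral_le_integral hXint hX0
    have h4 : δ / 2 * ∫ ω in Bᶜ, X ω ∂μ ≤ δ / 2 * ρ :=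
      mul_le_mul_of_nonneg_left h3 (by positivity)
    linarith
  have hBint : δ * ρ / 2 ≤ ∫ ω in B, X ω * Y ω ∂μ := by linarith
  -- integral of X over B is μ (A ∩ B)
  have hABeq : {ω | X ω = 1 ∧ δ / 2 < Y ω} = A ∩ B := rfl
  have hintBX : ∫ ω in B, X ω ∂μ = (μ (A ∩ B)).toReal := by
    rw [integral_congr_ae (ae_restrict_of_ae hXind), setIntegral_indicator hAm]
    simp [Set.inter_comm, Measure.real_def]
  have hXY2le : ∫ ω in B, X ω * Y ω ^ 2 ∂μ ≤ ρ := by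
    have h1 : ∫ ω in B, X ω * Y ω ^ 2 ∂μ ≤ ∫ ω in B, Y ω ^ 2 ∂μ := by
      refine setIntegral_mono_ae_restrict hXY2int.integrableOn hY2int.integrableOn
        (ae_restrict_of_ae ?_)
      filter_upwards [hX0, hX1] with ω h0 h1
      nlinarith [sq_nonneg (Y ω)]
    have h2 : ∫ ω in B, Y ω ^ 2 ∂μ ≤ ρ := by
      rw [← hY2]
      exact setIntegral_le_integral hY2int (.of_forall fun ω => sq_nonneg _)
    linarith
  -- upper bound on ∫_B X Y
  have hub : ∫ ω in B, X ω * Y ω ∂μ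
      ≤ 1 / δ * (μ (A ∩ B)).toReal + δ / 4 * ρ := by
    have h1 : ∫ ω in B, X ω * Y ω ∂μ
        ≤ ∫ ω in B, (1 / δ * X ω + δ / 4 * (X ω * Y ω ^ 2)) ∂μ := by
      refine setIntegral_mono_ae_restrict hXYint.integrableOn
        ((hXint.const_mul (1 / δ)).add (hXY2int.const_mul (δ / 4))).integrableOn
        (ae_restrict_of_ae ?_)
      filter_upwards [hX0] with ω h0
      have hinv : δ * (1 / δ) = 1 := mul_one_div_cancel hδ.ne'
      have key : Y ω ≤ 1 / δ + δ / 4 * Y ω ^ 2 := by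
        nlinarith [sq_nonneg (δ * Y ω - 2), hδ, hinv]
      calc X ω * Y ω ≤ X ω * (1 / δ + δ / 4 * Y ω ^ 2) :=
            mul_le_mul_of_nonneg_left key h0
        _ = 1 / δ * X ω + δ / 4 * (X ω * Y ω ^ 2) := by ring
    have h2 : ∫ ω in B, (1 / δ * X ω + δ / 4 * (X ω * Y ω ^ 2)) ∂μ
        = 1 / δ * ∫ ω in B, X ω ∂μ + δ / 4 * ∫ ω in B, X ω * Y ω ^ 2 ∂μ := by
      rw [integral_add ((hXint.const_mul (1 / δ)).integrableOn)
        ((hXY2int.const_mul (δ / 4)).integrableOn), integral_const_mul, integral_const_mul]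
    have h3 : δ / 4 * ∫ ω in B, X ω * Y ω ^ 2 ∂μ ≤ δ / 4 * ρ :=
      mul_le_mul_of_nonneg_left hXY2le (by positivity)
    rw [h2, hintBX] at h1
    linarith
  -- the key lower bound on μ (A ∩ B)
  have hmAB : δ ^ 2 / 4 * ρ ≤ (μ (A ∩ B)).toReal := by
    have h1 : δ * ρ / 4 ≤ 1 / δ * (μ (A ∩ B)).toReal := by linarith
    have h2 : δ * (δ * ρ / 4) ≤ δ * (1 / δ * (μ (A ∩ B)).toReal) :=
      mul_le_mul_of_nonneg_left h1 hδ.le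
    have h3 : δ * (1 / δ * (μ (A ∩ B)).toReal) = (μ (A ∩ B)).toReal := by
      field_simp
    nlinarith
  have hABsub : (μ (A ∩ B)).toReal ≤ (μ B).toReal :=
    ENNReal.toReal_mono (measure_ne_top μ B) (measure_mono Set.inter_subset_right)
  have hBpos : 0 < (μ B).toReal := by
    have : 0 < δ ^ 2 / 4 * ρ := by positivity
    linarith
  refine ⟨by linarith, ?_, ?_⟩
  · -- upper bound
    have h1 : (μ B).toReal * δ ^ 2 ≤ 4 * ρ := by nlinarith
    have h2 : (μ B).toReal ≤ 4 * ρ / δ ^ 2 := (le_div_iff₀ (by positivity)).mpr h1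
    have h3 : 4 * ρ / δ ^ 2 = 4 / δ ^ 2 * ρ := by ring
    nlinarith
  · rw [hABeq, le_div_iff₀ hBpos]
    nlinarith [mul_le_mul_of_nonneg_left hmarkov (by positivity : (0:ℝ) ≤ δ ^ 2 / 4)]
end
end
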